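/- Let A ∈ ℂ^{N_d×N} and B ∈ ℂ^{N×N_s}, and suppose every column of A and every column of B^* is nonzero. Define the (N_sN_d)×N matrix Φ by Φ_{(m,n),j} = A_{mj} B_{jn}, where (m,n) is a composite row index with 1 ≤ m ≤ N_d and 1 ≤ n ≤ N_s. Then every column of Φ is nonzero, with ‖Φ_j‖₂ = ‖A_j‖₂ ‖(B^*)_j‖₂, the Gram identity (Φ^*Φ)_{jk} = (A^*A)_{jk} (BB^*)_{kj} holds for all j,k, and the mutual coherence satisfies μ(Φ) ≤ μ(A) μ(B^*). -/

import Mathlib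

open Matrix Finset Filter

noncomputable section

/-- A vector is `s`-sparse if it has at most `s` nonzero entries. -/
def sparse {n : Type*} (s : ℕ) (x : n → ℂ) : Prop := {i | x i ≠ 0}.ncard ≤ s

/-- The ℓ² norm of the `j`-th column of a matrix. -/
def colNorm {m n : Type*} [Fintype m] (A : Matrix m n ℂ) (j : n) : ℝ :=
  Real.sqrt (∑ i, ‖A i j‖ ^ 2)

/-- The mutual coherence of a matrix:
`μ(A) = max_{j ≠ k} |⟨A_j, A_k⟩| / (‖A_j‖₂ ‖A_k‖₂)`. -/
def coherence {m n : Type*} [Fintype m] [Fintype n] (A : Matrix m n ℂ) : ℝ :=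
  sSup {r : ℝ | ∃ j k, j ≠ k ∧ r = ‖(Aᴴ * A) j k‖ / (colNorm A j * colNorm A k)}

/-- The ℓ¹ norm of a vector. -/
def l1 {n : Type*} [Fintype n] (x : n → ℂ) : ℝ := ∑ i, ‖x i‖

/-- The ℓ^∞ norm of a vector. -/
def linf {n : Type*} [Fintype n] (x : n → ℂ) : ℝ := ⨆ i, ‖x i‖

/-- The squared ℓ² norm of a vector. -/
def l2sq {n : Type*} [Fintype n] (x : n → ℂ) : ℝ := ∑ i, ‖x i‖ ^ 2

/-- The entrywise max norm of a matrix, `‖M‖_max = max_{i,j} |M_{ij}|`. -/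
def maxNorm {m n : Type*} [Fintype m] [Fintype n] (A : Matrix m n ℂ) : ℝ :=
  ⨆ p : m × n, ‖A p.1 p.2‖

/-- The induced ℓ¹ matrix norm (maximum absolute column sum). -/
def matL1 {m n : Type*} [Fintype m] [Fintype n] (A : Matrix m n ℂ) : ℝ :=
  ⨆ j, ∑ i, ‖A i j‖

/-- `x` is a hard thresholding `H_s(z)` of `z`: it agrees with `z` on an
index set `I` of size `s` consisting of entries of largest modulus, and
vanishes outside `I`. -/
def IsHardThreshold {n : Type*} [Fintype n] (s : ℕ) (z x : n → ℂ) : Prop :=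
  ∃ I : Finset n, I.card = s ∧ (∀ i ∈ I, ∀ j ∉ I, ‖z j‖ ≤ ‖z i‖) ∧
    (∀ i ∈ I, x i = z i) ∧ (∀ i ∉ I, x i = 0)

/-- `A` satisfies the restricted isometry property of order `t` with constant `δ`. -/
def SatisfiesRIP {m n : Type*} [Fintype m] [Fintype n] (A : Matrix m n ℂ) (t : ℕ) (δ : ℝ) :
    Prop :=
  0 < δ ∧ δ < 1 ∧ ∀ z : n → ℂ, sparse t z →
    (1 - δ) * l2sq z ≤ l2sq (A.mulVec z) ∧ l2sq (A.mulVec z) ≤ (1 + δ) * l2sq z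

/-- The spectral (operator ℓ²) norm of a square matrix. -/
def specNorm {n : Type*} [Fintype n] [DecidableEq n] (M : Matrix n n ℂ) : ℝ :=
  ‖Matrix.toEuclideanCLM (𝕜 := ℂ) M‖



lemma colNorm_pos {m n : Type*} [Fintype m] (A : Matrix m n ℂ) (j : n)
    (h : ∃ i, A i j ≠ 0) : 0 < colNorm A j := by
  obtain ⟨i, hi⟩ := h
  exact Real.sqrt_pos.2 (Finset.sum_pos' (fun i _ => by positivity)
    ⟨i, Finset.mem_univ i, pow_pos (norm_pos_iff.2 hi) 2⟩)

lemma gram_CS {m n : Type*} [Fintype m] (A : Matrix m n ℂ) (j k : n) :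
    ‖(Aᴴ * A) j k‖ ≤ colNorm A j * colNorm A k := by
  set x : EuclideanSpace ℂ m := (WithLp.equiv 2 (m → ℂ)).symm (fun i => A i j) with hx
  set y : EuclideanSpace ℂ m := (WithLp.equiv 2 (m → ℂ)).symm (fun i => A i k) with hy
  have h := norm_inner_le_norm (𝕜 := ℂ) x y
  simp only [PiLp.inner_apply, RCLike.inner_apply, EuclideanSpace.norm_eq, hx, hy,
    PiLp.toLp_apply] at h
  have e : (Aᴴ * A) j k = ∑ i, (starRingEnd ℂ) (A i j) * A i k := by
    simp [Matrix.mul_apply, Matrix.conjTranspose_apply]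
  rw [e]
  simpa [colNorm, mul_comm] using h

/-- Every element of the coherence set is between 0 and 1 when columns are nonzero. -/
lemma coherence_set_bounds {m n : Type*} [Fintype m] [Fintype n] (A : Matrix m n ℂ)
    (hA : ∀ j, ∃ i, A i j ≠ 0) (j k : n) :
    0 ≤ ‖(Aᴴ * A) j k‖ / (colNorm A j * colNorm A k) ∧
      ‖(Aᴴ * A) j k‖ / (colNorm A j * colNorm A k) ≤ 1 := by
  have hj := colNorm_pos A j (hA j)
  have hk := colNorm_pos A k (hA k)
  constructor
  · positivity
  · rw [div_le_one (by positivity)]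
    simpa using gram_CS A j k

lemma coherence_bddAbove {m n : Type*} [Fintype m] [Fintype n] (A : Matrix m n ℂ)
    (hA : ∀ j, ∃ i, A i j ≠ 0) :
    BddAbove {r : ℝ | ∃ j k, j ≠ k ∧ r = ‖(Aᴴ * A) j k‖ / (colNorm A j * colNorm A k)} := by
  refine ⟨1, fun r hr => ?_⟩
  obtain ⟨j, k, _, rfl⟩ := hr
  exact (coherence_set_bounds A hA j k).2

lemma coherence_nonneg {m n : Type*} [Fintype m] [Fintype n] (A : Matrix m n ℂ)
    (hA : ∀ j, ∃ i, A i j ≠ 0) : 0 ≤ coherence A := by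
  apply Real.sSup_nonneg
  rintro r ⟨j, k, _, rfl⟩
  exact (coherence_set_bounds A hA j k).1

/-- Equations (3.3) and (4.1): structure of the scattering sensing matrix and
`μ(Φ) ≤ μ(A) μ(B^*)`. -/
theorem scattering_sensing_matrix_coherence {Nd Ns N : ℕ}
    (A : Matrix (Fin Nd) (Fin N) ℂ) (B : Matrix (Fin N) (Fin Ns) ℂ)
    (hA : ∀ j, ∃ i, A i j ≠ 0) (hB : ∀ j, ∃ i, Bᴴ i j ≠ 0)
    (Φ : Matrix (Fin Nd × Fin Ns) (Fin N) ℂ)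
    (hΦ : ∀ p j, Φ p j = A p.1 j * B j p.2) :
    (∀ j, ∃ p, Φ p j ≠ 0) ∧
    (∀ j, colNorm Φ j = colNorm A j * colNorm Bᴴ j) ∧
    (∀ j k, (Φᴴ * Φ) j k = (Aᴴ * A) j k * (B * Bᴴ) k j) ∧
    coherence Φ ≤ coherence A * coherence Bᴴ := by
  have part1 : ∀ j, ∃ p, Φ p j ≠ 0 := by
    intro j
    obtain ⟨i, hi⟩ := hA j
    obtain ⟨nn, hn⟩ := hB j
    refine ⟨(i, nn), ?_⟩
    rw [hΦ]
    exact mul_ne_zero hi (by simpa [Matrix.conjTranspose_apply] using hn)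
  have part2 : ∀ j, colNorm Φ j = colNorm A j * colNorm Bᴴ j := by
    intro j
    unfold colNorm
    rw [← Real.sqrt_mul (by positivity)]
    congr 1
    rw [Fintype.sum_prod_type, Finset.sum_mul_sum]
    refine Finset.sum_congr rfl fun m _ => Finset.sum_congr rfl fun nn _ => ?_
    simp [hΦ, Matrix.conjTranspose_apply, mul_pow]
  have part3 : ∀ j k, (Φᴴ * Φ) j k = (Aᴴ * A) j k * (B * Bᴴ) k j := by
    intro j k
    simp only [Matrix.mul_apply, Matrix.conjTranspose_apply]
    rw [Fintype.sum_prod_type, Finset.sum_mul_sum]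
    refine Finset.sum_congr rfl fun m _ => Finset.sum_congr rfl fun nn _ => ?_
    simp only [hΦ, star_mul']
    ring
  refine ⟨part1, part2, part3, ?_⟩
  have hBcol : ∀ j, ∃ i, Bᴴ i j ≠ 0 := hB
  have hμA := coherence_nonneg A hA
  have hμB := coherence_nonneg Bᴴ hBcol
  have hbdA := coherence_bddAbove A hA
  have hbdB := coherence_bddAbove Bᴴ hBcol
  apply Real.sSup_le _ (mul_nonneg hμA hμB)
  rintro r ⟨j, k, hjk, rfl⟩
  have hnormB : ‖(B * Bᴴ) k j‖ = ‖((Bᴴ)ᴴ * Bᴴ) j k‖ := by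
    rw [Matrix.conjTranspose_conjTranspose]
    have hsa : (B * Bᴴ)ᴴ = B * Bᴴ := by simp [Matrix.conjTranspose_mul]
    have : (B * Bᴴ) j k = star ((B * Bᴴ) k j) := by
      conv_lhs => rw [← hsa]
      simp [Matrix.conjTranspose_apply]
    rw [this, norm_star]
  have key : ‖(Φᴴ * Φ) j k‖ / (colNorm Φ j * colNorm Φ k) =
      (‖(Aᴴ * A) j k‖ / (colNorm A j * colNorm A k)) *
      (‖((Bᴴ)ᴴ * Bᴴ) j k‖ / (colNorm Bᴴ j * colNorm Bᴴ k)) := by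
    rw [part3, norm_mul, part2 j, part2 k, hnormB, div_mul_div_comm]
    ring_nf
  rw [key]
  have haA : ‖(Aᴴ * A) j k‖ / (colNorm A j * colNorm A k) ≤ coherence A :=
    le_csSup hbdA ⟨j, k, hjk, rfl⟩
  have haB : ‖((Bᴴ)ᴴ * Bᴴ) j k‖ / (colNorm Bᴴ j * colNorm Bᴴ k) ≤ coherence Bᴴ :=
    le_csSup hbdB ⟨j, k, hjk, rfl⟩
  exact mul_le_mul haA haB (coherence_set_bounds Bᴴ hBcol j k).1 hμA


end
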